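/- Every homomorphism of left 𝕆-modules from 𝕆 to itself is a real scalar multiple of the identity: Hom_𝕆(𝕆,𝕆) = ℝ·Id. Likewise Hom_𝕆(𝕆̄,𝕆̄) = ℝ·Id, and Hom_𝕆(𝕆,𝕆̄) = {0}. -/

import Mathlib

noncomputable section

open scoped Quaternion

/-- The octonions, realized as pairs of quaternions via the Cayley–Dickson construction. -/
def Octo : Type := ℍ[ℝ] × ℍ[ℝ]

namespace Octo

instance : AddCommGroup Octo := inferInstanceAs (AddCommGroup (ℍ[ℝ] × ℍ[ℝ]))
instance : Module ℝ Octo := inferInstanceAs (Module ℝ (ℍ[ℝ] × ℍ[ℝ]))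

/-- Build an octonion from a pair of quaternions. -/
def mk (a b : ℍ[ℝ]) : Octo := (a, b)

/-- First quaternion component. -/
def p1 (x : Octo) : ℍ[ℝ] := (show ℍ[ℝ] × ℍ[ℝ] from x).1

/-- Second quaternion component. -/
def p2 (x : Octo) : ℍ[ℝ] := (show ℍ[ℝ] × ℍ[ℝ] from x).2

/-- Cayley–Dickson multiplication: `(a,b)(c,d) = (ac − d̄b, da + bc̄)`. -/
instance : Mul Octo :=
  ⟨fun x y => mk (p1 x * p1 y - star (p2 y) * p2 x) (p2 y * p1 x + p2 x * star (p1 y))⟩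

instance : One Octo := ⟨mk 1 0⟩

/-- Octonion conjugation: for `x = (a,b)`, `x̄ = (ā, −b)`. -/
def conj (x : Octo) : Octo := mk (star (p1 x)) (-(p2 x))

/-- The octonion associator `[x,y,z] = (xy)z − x(yz)`. -/
def assoc (x y z : Octo) : Octo := x * y * z - x * (y * z)

/-- The octonion commutator `[x,y] = xy − yx`. -/
def comm (x y : Octo) : Octo := x * y - y * x

/-- The canonical embedding of the reals into the octonions. -/
def ofReal (r : ℝ) : Octo := r • (1 : Octo)

end Octo

section OMod

variable {M : Type*} [AddCommGroup M] [Module ℝ M]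
variable {N : Type*} [AddCommGroup N] [Module ℝ N]

/-- `IsOMod sm` says that the scalar multiplication `sm : 𝕆 × M → M` makes the real vector
space `M` a left 𝕆-module: `sm` is ℝ-bilinear, unital, and the left associator is
alternating in its two octonion arguments. -/
structure IsOMod (sm : Octo → M → M) : Prop where
  smul_add : ∀ (p : Octo) (m n : M), sm p (m + n) = sm p m + sm p n
  add_smul : ∀ (p q : Octo) (m : M), sm (p + q) m = sm p m + sm q m
  real_smul : ∀ (r : ℝ) (p : Octo) (m : M), sm (r • p) m = r • sm p m
  smul_real : ∀ (r : ℝ) (p : Octo) (m : M), sm p (r • m) = r • sm p m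
  one_smul : ∀ m : M, sm 1 m = m
  alt : ∀ (p q : Octo) (m : M),
    sm (p * q) m - sm p (sm q m) = -(sm (q * p) m - sm q (sm p m))

/-- The left associator `[p,q,m] = (pq)m − p(qm)`. -/
def oLassoc (sm : Octo → M → M) (p q : Octo) (m : M) : M :=
  sm (p * q) m - sm p (sm q m)

/-- The set `𝒜(M)` of associative elements: `[p,q,m] = 0` for all `p,q ∈ 𝕆`. -/
def assocSet (sm : Octo → M → M) : Set M :=
  {m | ∀ p q : Octo, oLassoc sm p q m = 0}

/-- The set `𝒜⁻(M)` of conjugate associative elements: `(pq)m = q(pm)` for all `p,q ∈ 𝕆`. -/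
def conjAssocSet (sm : Octo → M → M) : Set M :=
  {m | ∀ p q : Octo, sm (p * q) m = sm q (sm p m)}

/-- A homomorphism of left 𝕆-modules: an ℝ-linear map commuting with 𝕆-scalar
multiplication. -/
def IsOHom (sm : Octo → M → M) (sm' : Octo → N → N) (f : M → N) : Prop :=
  IsLinearMap ℝ f ∧ ∀ (p : Octo) (m : M), f (sm p m) = sm' p (f m)

/-- Two left 𝕆-modules are isomorphic if there is a bijective homomorphism between them. -/
def OIso (sm : Octo → M → M) (sm' : Octo → N → N) : Prop :=
  ∃ f : M → N, IsOHom sm sm' f ∧ Function.Bijective f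

/-- A submodule: a real subspace closed under 𝕆-scalar multiplication. -/
structure IsOSubmodule (sm : Octo → M → M) (S : Set M) : Prop where
  zero_mem : (0 : M) ∈ S
  add_mem : ∀ {x y : M}, x ∈ S → y ∈ S → x + y ∈ S
  smul_mem : ∀ (r : ℝ) {x : M}, x ∈ S → r • x ∈ S
  osmul_mem : ∀ (p : Octo) {x : M}, x ∈ S → sm p x ∈ S

/-- `⟨m⟩_𝕆`, the smallest submodule containing `m`, as a set. -/
def genSet (sm : Octo → M → M) (m : M) : Set M :=
  ⋂₀ {S : Set M | IsOSubmodule sm S ∧ m ∈ S}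

/-- An element `m` is cyclic if `⟨m⟩_𝕆 = 𝕆m`. -/
def IsOCyclic (sm : Octo → M → M) (m : M) : Prop :=
  genSet sm m = {x | ∃ p : Octo, x = sm p m}

/-- 𝕆-linear independence of a subset `S ⊆ M`: any finite 𝕆-linear combination of
distinct elements of `S` that vanishes has all coefficients zero. -/
def OLinIndep (sm : Octo → M → M) (S : Set M) : Prop :=
  ∀ (n : ℕ) (s : Fin n → M) (r : Fin n → Octo), Function.Injective s → (∀ i, s i ∈ S) →
    (∑ i, sm (r i) (s i)) = 0 → ∀ i, r i = 0

end OMod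

/-- The canonical left 𝕆-module structure on 𝕆 itself. -/
def oSmul : Octo → Octo → Octo := fun p x => p * x

/-- The left 𝕆-module structure `𝕆̄` on 𝕆: `p ·̂ x = p̄x`. -/
def oBarSmul : Octo → Octo → Octo := fun p x => Octo.conj p * x


namespace Octo

lemma mul_def' (x y : Octo) : x * y =
    mk (p1 x * p1 y - star (p2 y) * p2 x) (p2 y * p1 x + p2 x * star (p1 y)) := rfl
lemma p1_mk' (a b : ℍ[ℝ]) : p1 (mk a b) = a := rfl
lemma p2_mk' (a b : ℍ[ℝ]) : p2 (mk a b) = b := rfl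
lemma mk_inj' {a b c d : ℍ[ℝ]} : mk a b = mk c d ↔ a = c ∧ b = d := Prod.ext_iff
lemma eq_mk' (x : Octo) : x = mk (p1 x) (p2 x) := rfl
lemma one_def' : (1:Octo) = mk 1 0 := rfl
lemma zero_def' : (0:Octo) = mk 0 0 := rfl
lemma smul_def' (c : ℝ) (x : Octo) : c • x = mk (c • p1 x) (c • p2 x) := rfl

lemma qstar_smul' (c : ℝ) (q : ℍ[ℝ]) : star (c • q) = c • star q := by
  ext <;> simp

lemma mul_one' (x : Octo) : x * 1 = x := by
  rw [mul_def', one_def', p1_mk', p2_mk']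
  simp only [star_zero, zero_mul, mul_one, star_one, sub_zero, zero_add]
  exact (eq_mk' x).symm

lemma mul_zero' (x : Octo) : x * (0:Octo) = 0 := by
  rw [mul_def', zero_def', p1_mk', p2_mk']
  simp only [mul_zero, star_zero, zero_mul, sub_zero, zero_add, sub_self]

lemma mul_smul_right' (c : ℝ) (x y : Octo) : x * (c • y) = c • (x * y) := by
  rw [mul_def', mul_def', smul_def', smul_def', p1_mk', p2_mk', p1_mk', p2_mk', mk_inj']
  constructor <;> simp [qstar_smul', smul_sub, smul_add, smul_mul_assoc, mul_smul_comm]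

lemma conj_mk' (a b : ℍ[ℝ]) : conj (mk a b) = mk (star a) (-b) := rfl

lemma conj_conj' (x : Octo) : conj (conj x) = x := by
  rw [show conj x = mk (star (p1 x)) (-(p2 x)) from rfl, conj_mk', star_star, neg_neg]
  exact (eq_mk' x).symm

lemma conj_mul' (x y : Octo) : conj (x * y) = conj y * conj x := by
  rw [show conj x = mk (star (p1 x)) (-(p2 x)) from rfl,
    show conj y = mk (star (p1 y)) (-(p2 y)) from rfl,
    show conj (x * y) = mk (star (p1 (x*y))) (-(p2 (x*y))) from rfl,
    mul_def', mul_def', p1_mk', p2_mk', p1_mk', p2_mk', p1_mk', p2_mk', mk_inj']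
  constructor
  · simp only [star_sub, star_add, star_mul, star_star, star_neg, mul_neg, neg_mul,
      neg_neg, neg_add]
  · simp only [star_sub, star_add, star_mul, star_star, star_neg, mul_neg, neg_mul,
      neg_neg, neg_add]
    exact add_comm _ _

/-- A quaternion literal, typed as `ℍ[ℝ]`. -/
def qmk (a b c d : ℝ) : ℍ[ℝ] := ⟨a, b, c, d⟩
@[simp] lemma qmk_re (a b c d : ℝ) : (qmk a b c d).re = a := rfl
@[simp] lemma qmk_imI (a b c d : ℝ) : (qmk a b c d).imI = b := rfl
@[simp] lemma qmk_imJ (a b c d : ℝ) : (qmk a b c d).imJ = c := rfl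
@[simp] lemma qmk_imK (a b c d : ℝ) : (qmk a b c d).imK = d := rfl

set_option maxHeartbeats 4000000 in
lemma nucleus' (a : Octo) (h : ∀ p q : Octo, (p*q)*a = p*(q*a)) : ∃ c : ℝ, a = c • (1:Octo) := by
  have h1 := h (mk (qmk 0 1 0 0) 0) (mk (qmk 0 0 1 0) 0)
  have h2 := h (mk (qmk 0 1 0 0) 0) (mk 0 1)
  have h3 := h (mk (qmk 0 0 1 0) 0) (mk 0 1)
  rw [eq_mk' a] at h1 h2 h3
  simp only [mul_def', p1_mk', p2_mk', mk_inj'] at h1 h2 h3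
  obtain ⟨h1a, h1b⟩ := h1
  obtain ⟨h2a, h2b⟩ := h2
  obtain ⟨h3a, h3b⟩ := h3
  rw [Quaternion.ext_iff] at h1a h1b h2a h2b h3a h3b
  try simp [Quaternion.re_mul, Quaternion.imI_mul, Quaternion.imJ_mul,
    Quaternion.imK_mul, Quaternion.re_star, Quaternion.imI_star,
    Quaternion.imJ_star, Quaternion.imK_star] at h1a
  try simp [Quaternion.re_mul, Quaternion.imI_mul, Quaternion.imJ_mul,
    Quaternion.imK_mul, Quaternion.re_star, Quaternion.imI_star,
    Quaternion.imJ_star, Quaternion.imK_star] at h1b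
  try simp [Quaternion.re_mul, Quaternion.imI_mul, Quaternion.imJ_mul,
    Quaternion.imK_mul, Quaternion.re_star, Quaternion.imI_star,
    Quaternion.imJ_star, Quaternion.imK_star] at h2a
  try simp [Quaternion.re_mul, Quaternion.imI_mul, Quaternion.imJ_mul,
    Quaternion.imK_mul, Quaternion.re_star, Quaternion.imI_star,
    Quaternion.imJ_star, Quaternion.imK_star] at h2b
  try simp [Quaternion.re_mul, Quaternion.imI_mul, Quaternion.imJ_mul,
    Quaternion.imK_mul, Quaternion.re_star, Quaternion.imI_star,
    Quaternion.imJ_star, Quaternion.imK_star] at h3a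
  try simp [Quaternion.re_mul, Quaternion.imI_mul, Quaternion.imJ_mul,
    Quaternion.imK_mul, Quaternion.re_star, Quaternion.imI_star,
    Quaternion.imJ_star, Quaternion.imK_star] at h3b
  obtain ⟨b1, b2, b3, b4⟩ := h1b
  obtain ⟨c1, c2⟩ := h2b
  obtain ⟨d1, d2⟩ := h3b
  refine ⟨(p1 a).re, ?_⟩
  rw [eq_mk' a, one_def', smul_def', p1_mk', p2_mk', mk_inj',
    Quaternion.ext_iff, Quaternion.ext_iff]
  simp [p1_mk', p2_mk']
  refine ⟨⟨?_, ?_, ?_⟩, ?_, ?_, ?_, ?_⟩ <;> linarith [h2a.1, h3a.2]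

set_option maxHeartbeats 4000000 in
lemma conjnuc' (a : Octo) (h : ∀ p q : Octo, (p*q)*a = q*(p*a)) : a = 0 := by
  have h1 := h (mk (qmk 0 1 0 0) 0) (mk (qmk 0 0 1 0) 0)
  have h2 := h (mk (qmk 0 1 0 0) 0) (mk 0 1)
  have h3 := h (mk (qmk 0 0 1 0) 0) (mk 0 1)
  have h4 := h (mk (qmk 0 0 0 1) 0) (mk 0 1)
  rw [eq_mk' a] at h1 h2 h3 h4
  simp only [mul_def', p1_mk', p2_mk', mk_inj'] at h1 h2 h3 h4
  obtain ⟨h1a, h1b⟩ := h1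
  obtain ⟨h2a, h2b⟩ := h2
  obtain ⟨h3a, h3b⟩ := h3
  obtain ⟨h4a, h4b⟩ := h4
  rw [Quaternion.ext_iff] at h1a h1b h2a h2b h3a h3b h4a h4b
  try simp [Quaternion.re_mul, Quaternion.imI_mul, Quaternion.imJ_mul,
    Quaternion.imK_mul, Quaternion.re_star, Quaternion.imI_star,
    Quaternion.imJ_star, Quaternion.imK_star] at h1a
  try simp [Quaternion.re_mul, Quaternion.imI_mul, Quaternion.imJ_mul,
    Quaternion.imK_mul, Quaternion.re_star, Quaternion.imI_star,
    Quaternion.imJ_star, Quaternion.imK_star] at h1b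
  try simp [Quaternion.re_mul, Quaternion.imI_mul, Quaternion.imJ_mul,
    Quaternion.imK_mul, Quaternion.re_star, Quaternion.imI_star,
    Quaternion.imJ_star, Quaternion.imK_star] at h2a
  try simp [Quaternion.re_mul, Quaternion.imI_mul, Quaternion.imJ_mul,
    Quaternion.imK_mul, Quaternion.re_star, Quaternion.imI_star,
    Quaternion.imJ_star, Quaternion.imK_star] at h2b
  try simp [Quaternion.re_mul, Quaternion.imI_mul, Quaternion.imJ_mul,
    Quaternion.imK_mul, Quaternion.re_star, Quaternion.imI_star,
    Quaternion.imJ_star, Quaternion.imK_star] at h3a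
  try simp [Quaternion.re_mul, Quaternion.imI_mul, Quaternion.imJ_mul,
    Quaternion.imK_mul, Quaternion.re_star, Quaternion.imI_star,
    Quaternion.imJ_star, Quaternion.imK_star] at h3b
  try simp [Quaternion.re_mul, Quaternion.imI_mul, Quaternion.imJ_mul,
    Quaternion.imK_mul, Quaternion.re_star, Quaternion.imI_star,
    Quaternion.imJ_star, Quaternion.imK_star] at h4a
  try simp [Quaternion.re_mul, Quaternion.imI_mul, Quaternion.imJ_mul,
    Quaternion.imK_mul, Quaternion.re_star, Quaternion.imI_star,
    Quaternion.imJ_star, Quaternion.imK_star] at h4b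
  rw [eq_mk' a, zero_def', mk_inj', Quaternion.ext_iff, Quaternion.ext_iff]
  simp [p1_mk', p2_mk']
  refine ⟨⟨?_, ?_, ?_, ?_⟩, ?_, ?_, ?_, ?_⟩ <;>
    linarith [h1a.1, h1a.2.1, h1a.2.2.1, h1a.2.2.2, h2a.1, h2a.2, h3a.1, h3a.2, h4a.1, h4a.2]

end Octo

/-- `Hom_𝕆(𝕆,𝕆) = ℝ·Id`, `Hom_𝕆(𝕆̄,𝕆̄) = ℝ·Id`, and `Hom_𝕆(𝕆,𝕆̄) = {0}`. -/
theorem stmt14 :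
    ({f : Octo → Octo | IsOHom oSmul oSmul f} = {f | ∃ c : ℝ, f = fun x => c • x}) ∧
    ({f : Octo → Octo | IsOHom oBarSmul oBarSmul f} = {f | ∃ c : ℝ, f = fun x => c • x}) ∧
    ({f : Octo → Octo | IsOHom oSmul oBarSmul f} = {fun _ => (0 : Octo)}) := by
  classical
  have lin : ∀ c : ℝ, IsLinearMap ℝ (fun x : Octo => c • x) :=
    fun c => ⟨fun x y => smul_add c x y, fun r x => smul_comm c r x⟩
  refine ⟨?_, ?_, ?_⟩
  · ext f
    simp only [Set.mem_setOf_eq]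
    constructor
    · rintro ⟨hf, hsm⟩
      simp only [oSmul] at hsm
      have e1 : ∀ q : Octo, f q = q * f 1 := by
        intro q
        have := hsm q 1
        rwa [Octo.mul_one' q] at this
      have key : ∀ p q : Octo, (p * q) * f 1 = p * (q * f 1) := by
        intro p q
        have e2 := hsm p q
        rw [e1 q, e1 (p * q)] at e2
        exact e2
      obtain ⟨c, hc⟩ := Octo.nucleus' (f 1) key
      refine ⟨c, funext fun x => ?_⟩
      rw [e1 x, hc, Octo.mul_smul_right', Octo.mul_one']
    · rintro ⟨c, rfl⟩
      refine ⟨lin c, fun p m => ?_⟩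
      simp only [oSmul]
      exact (Octo.mul_smul_right' c p m).symm
  · ext f
    simp only [Set.mem_setOf_eq]
    constructor
    · rintro ⟨hf, hsm⟩
      simp only [oBarSmul] at hsm
      have e1 : ∀ q : Octo, f q = q * f 1 := by
        intro q
        have := hsm (Octo.conj q) 1
        rwa [Octo.conj_conj', Octo.mul_one' q] at this
      have key : ∀ p q : Octo, (p * q) * f 1 = p * (q * f 1) := by
        intro p q
        have e2 := hsm (Octo.conj p) q
        rw [Octo.conj_conj'] at e2
        rw [e1 q, e1 (p * q)] at e2
        exact e2
      obtain ⟨c, hc⟩ := Octo.nucleus' (f 1) key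
      refine ⟨c, funext fun x => ?_⟩
      rw [e1 x, hc, Octo.mul_smul_right', Octo.mul_one']
    · rintro ⟨c, rfl⟩
      refine ⟨lin c, fun p m => ?_⟩
      simp only [oBarSmul]
      exact (Octo.mul_smul_right' c (Octo.conj p) m).symm
  · ext f
    simp only [Set.mem_setOf_eq, Set.mem_singleton_iff]
    constructor
    · rintro ⟨hf, hsm⟩
      simp only [oSmul, oBarSmul] at hsm
      have e1 : ∀ q : Octo, f q = Octo.conj q * f 1 := by
        intro q
        have := hsm q 1
        rwa [Octo.mul_one' q] at this
      have key : ∀ u v : Octo, (u * v) * f 1 = v * (u * f 1) := by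
        intro u v
        have e2 := hsm (Octo.conj v) (Octo.conj u)
        rw [e1 (Octo.conj u), e1 (Octo.conj v * Octo.conj u), Octo.conj_mul',
          Octo.conj_conj', Octo.conj_conj'] at e2
        exact e2
      have hz := Octo.conjnuc' (f 1) key
      funext x
      rw [e1 x, hz, Octo.mul_zero']
    · rintro rfl
      refine ⟨⟨fun x y => by simp, fun r x => by simp⟩, fun p m => ?_⟩
      simp only [oBarSmul]
      exact (Octo.mul_zero' (Octo.conj p)).symm
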